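/- arXiv:0806.0024 — 2 statements merged into one kernel-verified Lean document; each statement's English description precedes it below -/
import Mathlib

section
/- For every integer n ≥ 3 with n ≠ 4, if ω : Λ²ℂⁿ → so(n,ℂ) is an so(n,ℂ)-equivariant linear map such that the trilinear map (u, v, w) ↦ ω(u∧v)·w on ℂⁿ is totally antisymmetric, then ω = 0. In particular, for n ≠ 4 no nonzero equivariant ω on the standard representation of so(n,ℂ) defines a LATKe bracket. -/
/-!
STATEMENT 12: For every integer n ≥ 3 with n ≠ 4, if ω : Λ²ℂⁿ → so(n,ℂ) is an
so(n,ℂ)-equivariant linear map such that the trilinear map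
(u, v, w) ↦ ω(u∧v)·w on ℂⁿ is totally antisymmetric, then ω = 0.  In
particular, for n ≠ 4 no nonzero equivariant ω on the standard representation
of so(n,ℂ) defines a LATKe bracket.
-/

open Matrix

/-- The `a`-th standard basis vector `e_a` of `ℂⁿ`. -/
noncomputable def E {n : ℕ} (a : Fin n) : Fin n → ℂ := Pi.single a 1

/-- The antisymmetric matrix `e_{ab}`: `+1` in entry `(a,b)`, `−1` in entry
`(b,a)`, zeros elsewhere. -/
noncomputable def Eab {n : ℕ} (a b : Fin n) : Matrix (Fin n) (Fin n) ℂ :=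
  Matrix.single a b 1 - Matrix.single b a 1

/-- A bilinear map `ℂⁿ × ℂⁿ → Matrix`; an alternating such map is the same
thing as a linear map on `Λ²ℂⁿ`. -/
abbrev BilMat (n : ℕ) : Type _ :=
  (Fin n → ℂ) →ₗ[ℂ] (Fin n → ℂ) →ₗ[ℂ] Matrix (Fin n) (Fin n) ℂ

/-- `so(n,ℂ)`-equivariance of a map `Λ²ℂⁿ → Matrix`:
`[X, ω(u∧v)] = ω((X·u)∧v + u∧(X·v))` for all antisymmetric `X`. -/
def IsEquivariant {n : ℕ} (ω : BilMat n) : Prop :=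
  ∀ X : Matrix (Fin n) (Fin n) ℂ, Xᵀ = -X →
    ∀ u v : Fin n → ℂ,
      X * ω u v - ω u v * X = ω (X.mulVec u) v + ω u (X.mulVec v)

lemma Eab_transpose {n : ℕ} (a b : Fin n) : (Eab a b)ᵀ = -(Eab a b) := by
  ext i j
  simp [Eab, Matrix.single, and_comm]

lemma Eab_mulVec_fst {n : ℕ} (a e : Fin n) (hea : e ≠ a) :
    (Eab e a) *ᵥ (E e) = -(E a) := by
  ext i
  simp [Eab, E, Matrix.mulVec_single, Matrix.single, Pi.single_apply,
    hea.symm, eq_comm]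

lemma Eab_mulVec_other {n : ℕ} (a b e : Fin n) (hba : b ≠ a) (hbe : b ≠ e) :
    (Eab e a) *ᵥ (E b) = 0 := by
  ext i
  simp [Eab, E, Matrix.mulVec_single, Matrix.single, Pi.single_apply,
    hba.symm, hbe.symm]

lemma Eab_mul_apply {n : ℕ} (a e c d : Fin n) (M : Matrix (Fin n) (Fin n) ℂ)
    (hd1 : d ≠ e) (hd2 : d ≠ a) : ((Eab e a) * M) d c = 0 := by
  simp [Eab, Matrix.sub_mul, Matrix.mul_apply, Matrix.single,
    hd1.symm, hd2.symm]

lemma mul_Eab_apply {n : ℕ} (a e c d : Fin n) (M : Matrix (Fin n) (Fin n) ℂ)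
    (hc1 : c ≠ e) (hc2 : c ≠ a) : (M * (Eab e a)) d c = 0 := by
  simp [Eab, Matrix.mul_sub, Matrix.mul_apply, Matrix.single,
    hc1.symm, hc2.symm]

theorem no_latke_bracket_of_ne_four (n : ℕ) (h3 : 3 ≤ n) (h4 : n ≠ 4)
    (ω : BilMat n)
    (halt : ∀ u : Fin n → ℂ, ω u u = 0)
    (hso : ∀ u v : Fin n → ℂ, (ω u v)ᵀ = -(ω u v))
    (hequiv : IsEquivariant ω)
    (hanti : ∀ u v w : Fin n → ℂ, (ω u v).mulVec w = -((ω w v).mulVec u)) :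
    ω = 0 := by
  classical
  -- antisymmetry in the two arguments
  have hswap : ∀ u v, ω u v = -ω v u := by
    intro u v
    have h := halt (u + v)
    simp [map_add, halt u, halt v] at h
    exact eq_neg_of_add_eq_zero_right h
  -- F2 : antisymmetry in the matrix indices
  have F2 : ∀ (a b c d : Fin n), ω (E a) (E b) d c = -(ω (E a) (E b) c d) := by
    intro a b c d
    have h := congrFun (congrFun (hso (E a) (E b)) c) d
    simpa [Matrix.transpose_apply] using h
  -- F3 : antisymmetry u ↔ w
  have F3 : ∀ (a b c d : Fin n), ω (E a) (E b) d c = -(ω (E c) (E b) d a) := by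
    intro a b c d
    have h := congrFun (hanti (E a) (E b) (E c)) d
    simpa [E, Matrix.mulVec_single] using h
  -- F1 : antisymmetry a ↔ b
  have F1 : ∀ (a b c d : Fin n), ω (E a) (E b) d c = -(ω (E b) (E a) d c) := by
    intro a b c d
    rw [hswap (E a) (E b)]
    rfl
  -- vanishing when two of the four indices coincide
  have haa : ∀ a c d : Fin n, ω (E a) (E a) d c = 0 := by
    intro a c d; rw [halt]; rfl
  have hca : ∀ a b d : Fin n, ω (E a) (E b) d a = 0 := by
    intro a b d
    have := F3 a b a d
    linear_combination this / 2
  have hdc : ∀ a b c : Fin n, ω (E a) (E b) c c = 0 := by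
    intro a b c
    have := F2 a b c c
    linear_combination this / 2
  have hcb : ∀ a b d : Fin n, ω (E a) (E b) d b = 0 := by
    intro a b d
    rw [F3 a b b d, haa]
    simp
  have hdb : ∀ a b c : Fin n, ω (E a) (E b) b c = 0 := by
    intro a b c
    rw [F2 a b c b, hcb]
    simp
  have hda : ∀ a b c : Fin n, ω (E a) (E b) a c = 0 := by
    intro a b c
    rw [F2 a b c a, hca]
    simp
  -- main claim: all entries vanish
  have main : ∀ a b c d : Fin n, ω (E a) (E b) d c = 0 := by
    intro a b c d
    by_cases hab : a = b
    · subst hab; exact haa a c d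
    by_cases hac : a = c
    · subst hac; exact hca a b d
    by_cases had : a = d
    · subst had; exact hda a b c
    by_cases hbc : b = c
    · subst hbc; exact hcb a b d
    by_cases hbd : b = d
    · subst hbd; exact hdb a b c
    by_cases hcd : c = d
    · subst hcd; exact hdc a b c
    -- all distinct: n ≥ 5, pick a fifth index e
    have hcard : ({a, b, c, d} : Finset (Fin n)).card = 4 := by
      simp [Finset.card_insert_of_notMem, hab, hac, had, hbc, hbd, hcd]
    have hn4 : 4 ≤ n := by
      have := Finset.card_le_card (Finset.subset_univ ({a, b, c, d} : Finset (Fin n)))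
      simpa [hcard] using this
    have hn5 : 5 ≤ n := by omega
    have hex : ∃ e, e ∉ ({a, b, c, d} : Finset (Fin n)) := by
      by_contra hc
      push_neg at hc
      have hsub : (Finset.univ : Finset (Fin n)) ⊆ ({a, b, c, d} : Finset (Fin n)) :=
        fun x _ => hc x
      have := Finset.card_le_card hsub
      simp [hcard] at this
      omega
    obtain ⟨e, he⟩ := hex
    simp only [Finset.mem_insert, Finset.mem_singleton, not_or] at he
    obtain ⟨hea, heb, hec, hed⟩ := he
    -- apply equivariance with X = e_{ea}, u = e_e, v = e_b
    have heq := hequiv (Eab e a) (Eab_transpose e a) (E e) (E b)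
    rw [Eab_mulVec_fst a e hea, Eab_mulVec_other a b e (fun h => hab h.symm)
      (fun h => heb h.symm)] at heq
    have heq' := congrFun (congrFun heq d) c
    have hL1 : ((Eab e a) * ω (E e) (E b)) d c = 0 :=
      Eab_mul_apply a e c d _ (fun h => hed h.symm) (fun h => had h.symm)
    have hL2 : (ω (E e) (E b) * (Eab e a)) d c = 0 :=
      mul_Eab_apply a e c d _ (fun h => hec h.symm) (fun h => hac h.symm)
    have hR : (ω (-(E a)) (E b) + ω (E e) 0) d c = -(ω (E a) (E b) d c) := by
      simp [map_neg]
    rw [Matrix.sub_apply, hL1, hL2] at heq'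
    rw [hR] at heq'
    simpa using heq'.symm
  -- conclude ω = 0 from vanishing on the basis
  have hbasis : ∀ a b : Fin n, ω (E a) (E b) = 0 := by
    intro a b
    ext d c
    exact main a b c d
  apply Module.Basis.ext (Pi.basisFun ℂ (Fin n))
  intro a
  apply Module.Basis.ext (Pi.basisFun ℂ (Fin n))
  intro b
  have : (Pi.basisFun ℂ (Fin n)) a = E a := by
    ext i; simp [E, Pi.basisFun_apply]
  rw [this]
  have : (Pi.basisFun ℂ (Fin n)) b = E b := by
    ext i; simp [E, Pi.basisFun_apply]
  rw [this, hbasis]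
  rfl
end

section
/- Let u₁ = e₁₂+e₃₄, u₂ = −e₁₃+e₂₄, u₃ = e₁₄+e₂₃, u₄ = e₁₂−e₃₄, u₅ = e₁₃+e₂₄, u₆ = e₁₄−e₂₃ (a basis of so(4,ℂ) exhibiting the splitting sl(2,ℂ) × sl(2,ℂ), with {u₁,u₂,u₃} spanning one factor and {u₄,u₅,u₆} the other), and let φ' : Λ²ℂ⁴ → so(4,ℂ) be the map φ followed by the projection, in the basis u₁,…,u₆, that sets the u₄ and u₅ components to zero (so that the image lies in the span of {u₁,u₂,u₃,u₆} ≅ su(2)×u(1)). Then the trilinear map (u, v, w) ↦ φ'(u∧v)·w on ℂ⁴ is not totally antisymmetric: φ'(e₁∧e₂)·e₃ ≠ −φ'(e₃∧e₂)·e₁. Hence φ' defines no LATKe bracket. -/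
/-!
STATEMENT 17: Let u₁ = e₁₂+e₃₄, u₂ = −e₁₃+e₂₄, u₃ = e₁₄+e₂₃, u₄ = e₁₂−e₃₄,
u₅ = e₁₃+e₂₄, u₆ = e₁₄−e₂₃ (a basis of so(4,ℂ) exhibiting the splitting
sl(2,ℂ) × sl(2,ℂ)), and let φ′ : Λ²ℂ⁴ → so(4,ℂ) be φ followed by the
projection, in the basis u₁,…,u₆, that sets the u₄ and u₅ components to zero.
Then the trilinear map (u, v, w) ↦ φ′(u∧v)·w on ℂ⁴ is not totally
antisymmetric: φ′(e₁∧e₂)·e₃ ≠ −φ′(e₃∧e₂)·e₁.  Hence φ′ defines no LATKe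
bracket.
-/

open Matrix

/-- The defining values of the map `φ : Λ²ℂ⁴ → so(4,ℂ)` on the standard basis:
`φ(e₁∧e₂) = e₃₄`, `φ(e₁∧e₃) = −e₂₄`, `φ(e₁∧e₄) = e₂₃`, `φ(e₂∧e₃) = e₁₄`,
`φ(e₂∧e₄) = −e₁₃`, `φ(e₃∧e₄) = e₁₂`. -/
def PhiValues (φ : BilMat 4) : Prop :=
  φ (E 0) (E 1) = Eab 2 3 ∧ φ (E 0) (E 2) = -Eab 1 3 ∧ φ (E 0) (E 3) = Eab 1 2 ∧
  φ (E 1) (E 2) = Eab 0 3 ∧ φ (E 1) (E 3) = -Eab 0 2 ∧ φ (E 2) (E 3) = Eab 0 1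

/-- `u₄ = e₁₂ − e₃₄`. -/
noncomputable def u4 : Matrix (Fin 4) (Fin 4) ℂ := Eab 0 1 - Eab 2 3

/-- `u₅ = e₁₃ + e₂₄`. -/
noncomputable def u5 : Matrix (Fin 4) (Fin 4) ℂ := Eab 0 2 + Eab 1 3

/-- The `u₄`-component of an antisymmetric matrix `M = Σ cᵢ uᵢ`:
`c₄ = (M₁₂ − M₃₄)/2`. -/
noncomputable def c4 (M : Matrix (Fin 4) (Fin 4) ℂ) : ℂ := (M 0 1 - M 2 3) / 2

/-- The `u₅`-component of an antisymmetric matrix `M = Σ cᵢ uᵢ`: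
`c₅ = (M₁₃ + M₂₄)/2`. -/
noncomputable def c5 (M : Matrix (Fin 4) (Fin 4) ℂ) : ℂ := (M 0 2 + M 1 3) / 2

/-- The projection of `so(4,ℂ)` onto the span of `{u₁,u₂,u₃,u₆}` along
`{u₄,u₅}`: it sets the `u₄` and `u₅` components to zero. -/
noncomputable def proj (M : Matrix (Fin 4) (Fin 4) ℂ) : Matrix (Fin 4) (Fin 4) ℂ :=
  M - c4 M • u4 - c5 M • u5

/-- `φ′`, the composition of `φ` with the projection killing `u₄` and `u₅`. -/
noncomputable def phi' (φ : BilMat 4) (u v : Fin 4 → ℂ) :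
    Matrix (Fin 4) (Fin 4) ℂ :=
  proj (φ u v)

theorem phi'_not_antisymmetric (φ : BilMat 4)
    (halt : ∀ u : Fin 4 → ℂ, φ u u = 0) (hval : PhiValues φ) :
    (phi' φ (E 0) (E 1)).mulVec (E 2) ≠ -((phi' φ (E 2) (E 1)).mulVec (E 0)) := by
  have hanti : φ (E 2) (E 1) = - φ (E 1) (E 2) := by
    have h := halt (E 1 + E 2)
    simp only [map_add, LinearMap.add_apply, halt] at h
    linear_combination (norm := abel) h
  intro h
  obtain ⟨h12, _, _, h13, _, _⟩ := hval
  simp only [phi', hanti, h13, h12] at h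
  have h3 := congrFun h 3
  simp only [proj, c4, c5, u4, u5, Eab, Matrix.mulVec, dotProduct,
    Fin.sum_univ_four, Matrix.sub_apply, Matrix.neg_apply, Matrix.add_apply,
    Matrix.smul_apply, Matrix.single, E, Pi.single, Function.update,
    Pi.neg_apply, Pi.sub_apply, Fin.reduceEq] at h3
  simp at h3
end
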